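/- Let F = {(u,v,w) ∈ ℝ³ : v ≥ 0, w ≥ 0, v + w ≥ u²} and for t ∈ (−1,1) let x_t = (t, t², 0) (so x_t lies on the manifold M = {(t,t²,0) : t ∈ (−1,1)} ⊂ F). Then the normal cone mapping restricted to M fails to be inner semicontinuous at the origin: the vector (0,−1,0) belongs to N_F(0,0,0), yet there exists ε > 0 such that for every t with 0 < |t| < 1 and every y ∈ N_F(x_t), one has ‖y − (0,−1,0)‖ ≥ ε. -/

import Mathlib

/-- The point `(t, t², 0)` of `ℝ³`. -/
noncomputable def valleyPoint (t : ℝ) : EuclideanSpace ℝ (Fin 3) := WithLp.toLp 2 (![t, t ^ 2, 0] : Fin 3 → ℝ)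

/-- The vector `(0, −1, 0)` of `ℝ³`. -/
noncomputable def negE1 : EuclideanSpace ℝ (Fin 3) := WithLp.toLp 2 (![0, -1, 0] : Fin 3 → ℝ)

/-- For `F = {(u,v,w) : v ≥ 0, w ≥ 0, v + w ≥ u²} ⊆ ℝ³` and the manifold
`M = {(t,t²,0) : t ∈ (−1,1)}`, the normal cone mapping restricted to `M` fails to be
inner semicontinuous at the origin: `(0,−1,0) ∈ N_F(0)`, yet normals at nearby points
`(t,t²,0)` with `0 < |t| < 1` stay uniformly far from `(0,−1,0)`. -/
theorem normal_cone_not_inner_semicontinuous_valley :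
    (∀ q ∈ {p : EuclideanSpace ℝ (Fin 3) | 0 ≤ p 1 ∧ 0 ≤ p 2 ∧ p 0 ^ 2 ≤ p 1 + p 2},
        (inner ℝ negE1 (q - (0 : EuclideanSpace ℝ (Fin 3))) : ℝ) ≤ 0) ∧
      ∃ ε > (0 : ℝ), ∀ t : ℝ, 0 < |t| → |t| < 1 →
        ∀ y : EuclideanSpace ℝ (Fin 3),
          (∀ q ∈ {p : EuclideanSpace ℝ (Fin 3) | 0 ≤ p 1 ∧ 0 ≤ p 2 ∧ p 0 ^ 2 ≤ p 1 + p 2},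
            (inner ℝ y (q - valleyPoint t) : ℝ) ≤ 0) →
          ε ≤ ‖y - negE1‖ := by
  constructor
  · intro q hq
    obtain ⟨h1, h2, h3⟩ := hq
    simp [negE1, PiLp.inner_apply, Fin.sum_univ_three]
    linarith
  · refine ⟨1/2, by norm_num, fun t ht ht1 y hy => ?_⟩
    have htne : t ≠ 0 := by simpa using ht.ne'
    have ht2 : 0 < t ^ 2 := by positivity
    -- q = (t, t²+1, 0) gives y 1 ≤ 0
    have h1 : y 1 ≤ 0 := by
      have := hy (WithLp.toLp 2 (![t, t ^ 2 + 1, 0] : Fin 3 → ℝ) : EuclideanSpace ℝ (Fin 3))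
        (by refine ⟨?_, ?_, ?_⟩ <;> simp <;> nlinarith)
      simp [valleyPoint, PiLp.inner_apply, Fin.sum_univ_three] at this
      linarith
    -- q = (t, 0, t²) gives y 2 ≤ y 1
    have h2 : y 2 ≤ y 1 := by
      have := hy (WithLp.toLp 2 (![t, 0, t ^ 2] : Fin 3 → ℝ) : EuclideanSpace ℝ (Fin 3))
        (by refine ⟨?_, ?_, ?_⟩ <;> simp <;> positivity)
      simp [valleyPoint, PiLp.inner_apply, Fin.sum_univ_three] at this
      nlinarith
    have hnorm : ‖y - negE1‖ = Real.sqrt ((y 0) ^ 2 + (y 1 + 1) ^ 2 + (y 2) ^ 2) := by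
      rw [EuclideanSpace.norm_eq]
      simp only [negE1, Fin.sum_univ_three, Real.norm_eq_abs, sq_abs, PiLp.sub_apply, PiLp.toLp_apply, WithLp.ofLp_toLp, Matrix.cons_val_zero,
        Matrix.cons_val_one, Matrix.head_cons, Matrix.cons_val_two, Matrix.tail_cons]
      ring_nf
    rw [hnorm]
    rw [show (1/2 : ℝ) = Real.sqrt (1/4) by
      rw [show (1/4 : ℝ) = (1/2) ^ 2 by norm_num, Real.sqrt_sq (by norm_num)]]
    apply Real.sqrt_le_sqrt
    nlinarith [sq_nonneg (y 0), sq_nonneg (2 * y 1 + 1), mul_nonneg (neg_nonneg.2 h1) (neg_nonneg.2 (h2.trans h1)), sq_nonneg (y 2 - y 1)]
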